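/- Let H be a graph on r vertices, G a graph on n vertices, and for subsets U ⊆ V(G) let N_H(U) be the number of labeled copies of H in G with all vertices in U. If G satisfies P*_{H,p}(ε), i.e., |N_H(U) − p^m|U|^r| ≤ εn^r for all U, then for all disjoint V_1,...,V_r ⊆ V(G), the number of labeled copies of H with exactly one vertex in each V_i is within (2^r − 1)εn^r of p^m·r!·Π_{i=1}^r |V_i|. -/
import Mathlib


open Finset

/-- Number of labeled copies of `H` in `G` with all vertices in `U`. -/
noncomputable def labCopies {V : Type*} [Fintype V] (G : SimpleGraph V) (r : ℕ)
    (H : SimpleGraph (Fin r)) (U : Finset V) : ℕ :=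
  Nat.card {f : Fin r → V // Function.Injective f ∧ (∀ i, f i ∈ U) ∧
    ∀ i j, H.Adj i j → G.Adj (f i) (f j)}

/-- Number of labeled copies of `H` in `G` with exactly one vertex in each `Vs i`. -/
noncomputable def labCopiesTrans {V : Type*} [Fintype V] (G : SimpleGraph V) (r : ℕ)
    (H : SimpleGraph (Fin r)) (Vs : Fin r → Finset V) : ℕ :=
  Nat.card {f : Fin r → V // Function.Injective f ∧
    (∀ i j, H.Adj i j → G.Adj (f i) (f j)) ∧
    ∃ σ : Equiv.Perm (Fin r), ∀ i, f i ∈ Vs (σ i)}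

lemma kernelAux (r : ℕ) (T : Finset (Fin r)) :
    ∑ S : Finset (Fin r), (-1:ℝ)^(r - S.card) * (if T ⊆ S then (1:ℝ) else 0)
      = if T = Finset.univ then 1 else 0 := by
  classical
  rw [← Fintype.sum_bijective (fun S : Finset (Fin r) => Sᶜ)
    (Function.Involutive.bijective (fun S => compl_compl S))
    (fun S => (-1:ℝ)^(S.card) * (if S ⊆ Tᶜ then (1:ℝ) else 0))
    (fun S => (-1:ℝ)^(r - S.card) * (if T ⊆ S then (1:ℝ) else 0)) ?_]
  · have h3 : ∑ S : Finset (Fin r), (-1:ℝ)^(S.card) * (if S ⊆ Tᶜ then (1:ℝ) else 0)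
        = ∑ S ∈ Tᶜ.powerset, (-1:ℝ)^(S.card) := by
      simp only [mul_ite, mul_one, mul_zero, ← Finset.sum_filter]
      congr 1
      ext S; simp [Finset.mem_powerset]
    rw [h3]
    have h4 : ∑ S ∈ Tᶜ.powerset, (-1:ℝ)^(S.card)
        = ((∑ S ∈ Tᶜ.powerset, (-1:ℤ)^(S.card) : ℤ) : ℝ) := by push_cast; rfl
    rw [h4, Finset.sum_powerset_neg_one_pow_card]
    by_cases h : T = Finset.univ
    · simp [h]
    · have : Tᶜ ≠ ∅ := by
        intro hc
        exact h (by simpa [Finset.compl_eq_empty_iff] using hc)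
      simp [h, this]
  · intro S
    have h1 : (Sᶜ).card = r - S.card := by simp [Finset.card_compl]
    have h2 : T ⊆ Sᶜ ↔ S ⊆ Tᶜ := Finset.subset_compl_comm
    simp only [h1, h2]
    congr 2
    rw [Nat.sub_sub_self (Finset.card_le_univ S |>.trans_eq (by simp))]

lemma imageUniv (r : ℕ) (c : Fin r → Fin r) :
    Finset.univ.image c = Finset.univ ↔ Function.Surjective c := by
  constructor
  · intro h a
    have : a ∈ Finset.univ.image c := by rw [h]; exact Finset.mem_univ a
    simpa using this
  · intro h
    rw [Finset.eq_univ_iff_forall]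
    intro a
    obtain ⟨b, hb⟩ := h a
    exact Finset.mem_image.2 ⟨b, Finset.mem_univ b, hb⟩

lemma polyAux (r : ℕ) (x : Fin r → ℝ) :
    ∑ S : Finset (Fin r), (-1:ℝ)^(r - S.card) * (∑ i ∈ S, x i)^r
      = (Nat.factorial r : ℝ) * ∏ i, x i := by
  classical
  have h1 : ∀ S : Finset (Fin r), (∑ i ∈ S, x i)^r
      = ∑ c : Fin r → Fin r, (if Finset.univ.image c ⊆ S then (1:ℝ) else 0) * ∏ i, x (c i) := by
    intro S
    have : (∑ i ∈ S, x i)^r = ∏ _j : Fin r, ∑ i ∈ S, x i := by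
      simp [Finset.prod_const]
    rw [this, Finset.prod_univ_sum]
    have hpi : Fintype.piFinset (fun _ : Fin r => S)
        = Finset.univ.filter (fun c : Fin r → Fin r => Finset.univ.image c ⊆ S) := by
      ext c; simp [Fintype.mem_piFinset, Finset.image_subset_iff]
    rw [hpi, Finset.sum_filter]
    simp only [ite_mul, one_mul, zero_mul]
  calc ∑ S : Finset (Fin r), (-1:ℝ)^(r - S.card) * (∑ i ∈ S, x i)^r
      = ∑ S : Finset (Fin r), ∑ c : Fin r → Fin r,
          ((-1:ℝ)^(r - S.card) * (if Finset.univ.image c ⊆ S then (1:ℝ) else 0)) * ∏ i, x (c i) := by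
        refine Finset.sum_congr rfl fun S _ => ?_
        rw [h1 S, Finset.mul_sum]
        exact Finset.sum_congr rfl fun c _ => by ring
    _ = ∑ c : Fin r → Fin r,
          (∑ S : Finset (Fin r), (-1:ℝ)^(r - S.card) * (if Finset.univ.image c ⊆ S then (1:ℝ) else 0))
            * ∏ i, x (c i) := by
        rw [Finset.sum_comm]
        exact Finset.sum_congr rfl fun c _ => by rw [Finset.sum_mul]
    _ = ∑ c : Fin r → Fin r, (if Finset.univ.image c = Finset.univ then (1:ℝ) else 0) * ∏ i, x (c i) := by
        refine Finset.sum_congr rfl fun c _ => by rw [kernelAux]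
    _ = ∑ c ∈ Finset.univ.filter (fun c : Fin r → Fin r => Finset.univ.image c = Finset.univ),
          ∏ i, x (c i) := by
        simp only [ite_mul, one_mul, zero_mul, ← Finset.sum_filter]
    _ = ∑ σ : Equiv.Perm (Fin r), ∏ i, x (σ i) := by
        rw [← Finset.sum_image (g := fun (σ : Equiv.Perm (Fin r)) => (σ : Fin r → Fin r))
          (f := fun c => ∏ i, x (c i)) (s := Finset.univ)
          (by intro a _ b _ h; exact Equiv.coe_fn_injective h)]
        congr 1
        ext c
        simp only [Finset.mem_image, Finset.mem_univ, true_and, Finset.mem_filter, imageUniv]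
        constructor
        · intro h
          exact ⟨Equiv.ofBijective c ((Finite.surjective_iff_bijective).1 h), rfl⟩
        · rintro ⟨σ, rfl⟩; exact σ.surjective
    _ = (Nat.factorial r : ℝ) * ∏ i, x i := by
        have : ∀ σ : Equiv.Perm (Fin r), ∏ i, x (σ i) = ∏ i, x i := fun σ => Equiv.prod_comp σ x
        simp only [this, Finset.sum_const, Finset.card_univ, Fintype.card_perm, Fintype.card_fin,
          nsmul_eq_mul]
open Classical in
lemma labCopies_card {V : Type*} [Fintype V] (G : SimpleGraph V) (r : ℕ)
    (H : SimpleGraph (Fin r)) (U : Finset V) :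
    labCopies G r H U = (Finset.univ.filter (fun f : Fin r → V =>
      Function.Injective f ∧ (∀ i, f i ∈ U) ∧
      ∀ i j, H.Adj i j → G.Adj (f i) (f j))).card := by
  rw [labCopies, Nat.card_eq_fintype_card, Fintype.card_subtype]

open Classical in
lemma labCopiesTrans_card {V : Type*} [Fintype V] (G : SimpleGraph V) (r : ℕ)
    (H : SimpleGraph (Fin r)) (Vs : Fin r → Finset V) :
    labCopiesTrans G r H Vs = (Finset.univ.filter (fun f : Fin r → V =>
      Function.Injective f ∧ (∀ i j, H.Adj i j → G.Adj (f i) (f j)) ∧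
      ∃ σ : Equiv.Perm (Fin r), ∀ i, f i ∈ Vs (σ i))).card := by
  rw [labCopiesTrans, Nat.card_eq_fintype_card, Fintype.card_subtype]

open Classical in
lemma pointwiseAux {V : Type*} (r : ℕ) (Vs : Fin r → Finset V)
    (hdisj : ∀ i j, i ≠ j → Disjoint (Vs i) (Vs j)) (f : Fin r → V) :
    ∑ S : Finset (Fin r), (-1:ℝ)^(r - S.card)
        * (if ∀ i, f i ∈ S.biUnion Vs then (1:ℝ) else 0)
      = if ∃ σ : Equiv.Perm (Fin r), ∀ i, f i ∈ Vs (σ i) then (1:ℝ) else 0 := by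
  by_cases h : ∀ i, ∃ j, f i ∈ Vs j
  · set c : Fin r → Fin r := fun i => (h i).choose with hc
    have hcmem : ∀ i, f i ∈ Vs (c i) := fun i => (h i).choose_spec
    have huniq : ∀ i j, f i ∈ Vs j → j = c i := by
      intro i j hj
      by_contra hne
      exact Finset.disjoint_left.1 (hdisj j (c i) hne) hj (hcmem i)
    have hQ : ∀ S : Finset (Fin r), (∀ i, f i ∈ S.biUnion Vs) ↔ Finset.univ.image c ⊆ S := by
      intro S
      rw [Finset.image_subset_iff]
      constructor
      · intro hS i _
        obtain ⟨j, hjS, hj⟩ := Finset.mem_biUnion.1 (hS i)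
        rwa [huniq i j hj] at hjS
      · intro hS i
        exact Finset.mem_biUnion.2 ⟨c i, hS i (Finset.mem_univ i), hcmem i⟩
    have hR : (∃ σ : Equiv.Perm (Fin r), ∀ i, f i ∈ Vs (σ i)) ↔ Finset.univ.image c = Finset.univ := by
      constructor
      · rintro ⟨σ, hσ⟩
        have : ∀ i, σ i = c i := fun i => huniq i (σ i) (hσ i)
        rw [Finset.eq_univ_iff_forall]
        intro a
        exact Finset.mem_image.2 ⟨σ.symm a, Finset.mem_univ _, by rw [← this (σ.symm a), Equiv.apply_symm_apply]⟩
      · intro hsurj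
        have hs : Function.Surjective c := by
          intro a
          have : a ∈ Finset.univ.image c := by rw [hsurj]; exact Finset.mem_univ a
          simpa using this
        exact ⟨Equiv.ofBijective c ((Finite.surjective_iff_bijective).1 hs),
          fun i => hcmem i⟩
    simp only [hQ]
    rw [kernelAux]
    congr 1
    simp only [hR]
  · push_neg at h
    obtain ⟨i, hi⟩ := h
    have h1 : ∀ S : Finset (Fin r), ¬ (∀ j, f j ∈ S.biUnion Vs) := by
      intro S hS
      obtain ⟨j, _, hj⟩ := Finset.mem_biUnion.1 (hS i)
      exact hi j hj
    have h2 : ¬ ∃ σ : Equiv.Perm (Fin r), ∀ i, f i ∈ Vs (σ i) := by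
      rintro ⟨σ, hσ⟩
      exact hi (σ i) (hσ i)
    rw [if_neg h2]
    refine Finset.sum_eq_zero fun S _ => ?_
    rw [if_neg (h1 S), mul_zero]

open Classical in
lemma countAux {V : Type*} [Fintype V] (G : SimpleGraph V) (r : ℕ)
    (H : SimpleGraph (Fin r)) (Vs : Fin r → Finset V)
    (hdisj : ∀ i j, i ≠ j → Disjoint (Vs i) (Vs j)) :
    (labCopiesTrans G r H Vs : ℝ)
      = ∑ S : Finset (Fin r), (-1:ℝ)^(r - S.card) * (labCopies G r H (S.biUnion Vs) : ℝ) := by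
  have step : ∀ S : Finset (Fin r),
      (labCopies G r H (S.biUnion Vs) : ℝ)
        = ∑ f : Fin r → V, (if Function.Injective f ∧ (∀ i j, H.Adj i j → G.Adj (f i) (f j)) then (1:ℝ) else 0)
            * (if ∀ i, f i ∈ S.biUnion Vs then (1:ℝ) else 0) := by
    intro S
    rw [labCopies_card, Finset.card_filter, Nat.cast_sum]
    refine Finset.sum_congr rfl fun f _ => ?_
    by_cases h1 : Function.Injective f <;>
      by_cases h2 : (∀ i j, H.Adj i j → G.Adj (f i) (f j)) <;>
      by_cases h3 : (∀ i, ∃ a ∈ S, f i ∈ Vs a) <;>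
      simp [h1, h2, h3, Finset.mem_biUnion]
  have main : ∑ S : Finset (Fin r), (-1:ℝ)^(r - S.card) * (labCopies G r H (S.biUnion Vs) : ℝ)
      = ∑ f : Fin r → V, (if Function.Injective f ∧ (∀ i j, H.Adj i j → G.Adj (f i) (f j)) ∧
          (∃ σ : Equiv.Perm (Fin r), ∀ i, f i ∈ Vs (σ i)) then (1:ℝ) else 0) := by
    calc ∑ S : Finset (Fin r), (-1:ℝ)^(r - S.card) * (labCopies G r H (S.biUnion Vs) : ℝ)
        = ∑ S : Finset (Fin r), ∑ f : Fin r → V,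
            (if Function.Injective f ∧ (∀ i j, H.Adj i j → G.Adj (f i) (f j)) then (1:ℝ) else 0)
              * ((-1:ℝ)^(r - S.card) * (if ∀ i, f i ∈ S.biUnion Vs then (1:ℝ) else 0)) := by
          refine Finset.sum_congr rfl fun S _ => ?_
          rw [step S, Finset.mul_sum]
          exact Finset.sum_congr rfl fun f _ => by ring
      _ = ∑ f : Fin r → V,
            (if Function.Injective f ∧ (∀ i j, H.Adj i j → G.Adj (f i) (f j)) then (1:ℝ) else 0)
              * (if ∃ σ : Equiv.Perm (Fin r), ∀ i, f i ∈ Vs (σ i) then (1:ℝ) else 0) := by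
          rw [Finset.sum_comm]
          refine Finset.sum_congr rfl fun f _ => ?_
          rw [← Finset.mul_sum, pointwiseAux r Vs hdisj f]
      _ = ∑ f : Fin r → V, (if Function.Injective f ∧ (∀ i j, H.Adj i j → G.Adj (f i) (f j)) ∧
            (∃ σ : Equiv.Perm (Fin r), ∀ i, f i ∈ Vs (σ i)) then (1:ℝ) else 0) := by
          refine Finset.sum_congr rfl fun f _ => ?_
          by_cases h1 : Function.Injective f <;>
            by_cases h2 : (∀ i j, H.Adj i j → G.Adj (f i) (f j)) <;>
            by_cases h3 : (∃ σ : Equiv.Perm (Fin r), ∀ i, f i ∈ Vs (σ i)) <;>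
            simp [h1, h2, h3]
  rw [main, labCopiesTrans_card, Finset.card_filter, Nat.cast_sum]
  refine Finset.sum_congr rfl fun f _ => ?_
  split_ifs <;> simp

theorem stmt_12 {V : Type*} [Fintype V] (G : SimpleGraph V)
    (r m : ℕ) (H : SimpleGraph (Fin r)) [DecidableRel H.Adj]
    (hm : m = H.edgeFinset.card)
    (p ε : ℝ) (hp : 0 < p) (hp1 : p < 1)
    (n : ℕ) (hn : n = Fintype.card V)
    (hyp : ∀ U : Finset V,
      |(labCopies G r H U : ℝ) - p ^ m * (U.card : ℝ) ^ r| ≤ ε * n ^ r)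
    (Vs : Fin r → Finset V)
    (hdisj : ∀ i j, i ≠ j → Disjoint (Vs i) (Vs j)) :
    |(labCopiesTrans G r H Vs : ℝ)
        - p ^ m * (Nat.factorial r : ℝ) * ∏ i, ((Vs i).card : ℝ)|
      ≤ (2 ^ r - 1) * ε * n ^ r := by
  classical
  set T : Finset (Fin r) → ℝ := fun S => (-1:ℝ)^(r - S.card)
    * ((labCopies G r H (S.biUnion Vs) : ℝ) - p ^ m * (((S.biUnion Vs).card : ℝ)) ^ r) with hT
  have hc : ∀ S : Finset (Fin r), ((S.biUnion Vs).card : ℝ) = ∑ i ∈ S, ((Vs i).card : ℝ) := by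
    intro S
    rw [Finset.card_biUnion (fun i _ j _ h => hdisj i j h)]
    push_cast
    rfl
  have key2 : p ^ m * (Nat.factorial r : ℝ) * ∏ i, ((Vs i).card : ℝ)
      = ∑ S : Finset (Fin r), (-1:ℝ)^(r - S.card) * (p ^ m * (((S.biUnion Vs).card : ℝ)) ^ r) := by
    rw [mul_assoc, ← polyAux r (fun i => ((Vs i).card : ℝ)), Finset.mul_sum]
    refine Finset.sum_congr rfl fun S _ => ?_
    rw [hc S]
    ring
  have hdiff : (labCopiesTrans G r H Vs : ℝ)
      - p ^ m * (Nat.factorial r : ℝ) * ∏ i, ((Vs i).card : ℝ) = ∑ S : Finset (Fin r), T S := by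
    rw [countAux G r H Vs hdisj, key2, ← Finset.sum_sub_distrib]
    refine Finset.sum_congr rfl fun S _ => ?_
    rw [hT]
    ring
  have hempty : T (∅ : Finset (Fin r)) = 0 := by
    rw [hT]
    simp only [Finset.biUnion_empty, Finset.card_empty, Nat.cast_zero]
    rcases Nat.eq_zero_or_pos r with hr | hr
    · subst hr
      have hm0 : m = 0 := by
        rw [hm, Finset.card_eq_zero]
        ext e
        simp only [Finset.notMem_empty, iff_false]
        intro he
        induction e using Sym2.ind with
        | _ i j => exact i.elim0
      have hl : labCopies G 0 H ∅ = 1 := by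
        rw [labCopies]
        rw [Nat.card_congr (Equiv.subtypeUnivEquiv (fun f : Fin 0 → V =>
          ⟨fun {a b} _ => a.elim0, fun i => i.elim0, fun i => i.elim0⟩))]
        rw [Nat.card_eq_fintype_card]
        simp
      rw [hl, hm0]
      norm_num
    · have hl : labCopies G r H ∅ = 0 := by
        rw [labCopies]
        haveI : IsEmpty {f : Fin r → V // Function.Injective f ∧ (∀ i, f i ∈ (∅ : Finset V)) ∧
            ∀ i j, H.Adj i j → G.Adj (f i) (f j)} :=
          ⟨fun x => Finset.notMem_empty _ (x.2.2.1 ⟨0, hr⟩)⟩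
        exact Nat.card_of_isEmpty
      rw [hl, zero_pow hr.ne']
      simp
  rw [hdiff, ← Finset.sum_erase Finset.univ hempty]
  calc |∑ S ∈ Finset.univ.erase (∅ : Finset (Fin r)), T S|
      ≤ ∑ S ∈ Finset.univ.erase (∅ : Finset (Fin r)), |T S| := Finset.abs_sum_le_sum_abs _ _
    _ ≤ ∑ _S ∈ Finset.univ.erase (∅ : Finset (Fin r)), ε * (n:ℝ)^r := by
        refine Finset.sum_le_sum fun S _ => ?_
        rw [hT]
        calc |(-1:ℝ)^(r - S.card) * ((labCopies G r H (S.biUnion Vs) : ℝ)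
                - p ^ m * (((S.biUnion Vs).card : ℝ)) ^ r)|
            = |(labCopies G r H (S.biUnion Vs) : ℝ)
                - p ^ m * (((S.biUnion Vs).card : ℝ)) ^ r| := by
              rw [abs_mul, abs_pow, abs_neg, abs_one, one_pow, one_mul]
          _ ≤ ε * (n:ℝ)^r := hyp (S.biUnion Vs)
    _ = (2 ^ r - 1) * ε * (n:ℝ) ^ r := by
        rw [Finset.sum_const, nsmul_eq_mul]
        have hcard : (Finset.univ.erase (∅ : Finset (Fin r))).card = 2 ^ r - 1 := by
          rw [Finset.card_erase_of_mem (Finset.mem_univ _), Finset.card_univ,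
            Fintype.card_finset, Fintype.card_fin]
        rw [hcard, Nat.cast_sub Nat.one_le_two_pow]
        push_cast
        ring
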